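/- For the 3×3 Lax matrix L̃(λ) = diag(t₁,t₂,t₃)·λ + L̃⁰ normalized at infinity with the explicit entries given (off-diagonal (1,2) and (1,3) entries equal to 1, diagonal subleading entries t_{∞^(i),1}, entries (2,3) = -p + t₂q + t_{∞^(2),1}, (3,2) = -p + t₃q + t_{∞^(3),1}, and entries (2,1), (3,1) the stated quadratic expressions in p and q), the characteristic polynomial satisfies det(y·I₃ - L̃(λ)) = y³ - P₁(λ)y² + P₂(λ)y - P₃(λ) - (p³ - P₁(q)p² + P₂(q)p - P₃(q)), where P₁, P₂, P₃ are the polynomials in λ (independent of p,q) defined in the paper. -/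

import Mathlib

namespace Gl3Paper

/-- The polynomial `P₁(λ)` of the `𝔤𝔩₃` system. -/
noncomputable def P1 (t1 t2 t3 a1 a2 a3 : ℂ) (l : ℂ) : ℂ :=
  (t1 + t2 + t3) * l + a1 + a2 + a3

/-- The polynomial `P₂(λ)` of the `𝔤𝔩₃` system. -/
noncomputable def P2 (t1 t2 t3 a1 a2 a3 m1 m2 m3 : ℂ) (l : ℂ) : ℂ :=
  (t1*t2 + t1*t3 + t2*t3) * l^2
    + (t1*(a2 + a3) + t2*(a1 + a3) + t3*(a1 + a2)) * l
    - (t1*m1 + t2*m2 + t3*m3) + a1*a2 + a1*a3 + a2*a3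

/-- The polynomial `P₃(λ)` of the `𝔤𝔩₃` system. -/
noncomputable def P3 (t1 t2 t3 a1 a2 a3 m1 m2 m3 : ℂ) (l : ℂ) : ℂ :=
  t1*t2*t3 * l^3 + (t1*t2*a3 + t1*t3*a2 + t2*t3*a1) * l^2
    + (t1*t2*m3 + t1*t3*m2 + t2*t3*m1 + t1*a2*a3 + t2*a1*a3 + t3*a1*a2) * l

/-- The Lax matrix `L̃(λ)` normalized at infinity, expressed in the
Darboux coordinates `(q,p)` (Theorem `LaxMatrixgl3` of the paper). -/
noncomputable def Ltil (t1 t2 t3 a1 a2 a3 m2 m3 q p : ℂ) (l : ℂ) :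
    Matrix (Fin 3) (Fin 3) ℂ :=
  !![t1*l + a1, 1, 1;
     (t1 - t2)/(t2 - t3) *
       (p^2 - ((t2 + t3)*q + a2 + a3)*p + t2*t3*q^2 + (t2*a3 + t3*a2)*q
         + a2*a3 - m2*(t2 - t3)),
       t2*l + a2, -p + t2*q + a2;
     -((t1 - t3)/(t2 - t3)) *
       (p^2 - ((t2 + t3)*q + a2 + a3)*p + t2*t3*q^2 + (t2*a3 + t3*a2)*q
         + a2*a3 + m3*(t2 - t3)),
       -p + t3*q + a3, t3*l + a3]

set_option maxHeartbeats 1000000 in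
/-- The characteristic polynomial of the normalized `𝔤𝔩₃` Lax matrix:
`det(y·I₃ - L̃(λ)) = y³ - P₁(λ)y² + P₂(λ)y - P₃(λ) - (p³ - P₁(q)p² + P₂(q)p - P₃(q))`. -/
theorem charpoly_of_Ltil (t1 t2 t3 a1 a2 a3 m1 m2 m3 q p : ℂ)
    (h12 : t1 ≠ t2) (h13 : t1 ≠ t3) (h23 : t2 ≠ t3)
    (hm : m1 + m2 + m3 = 0) (l y : ℂ) :
    Matrix.det (y • (1 : Matrix (Fin 3) (Fin 3) ℂ) - Ltil t1 t2 t3 a1 a2 a3 m2 m3 q p l)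
      = y^3 - P1 t1 t2 t3 a1 a2 a3 l * y^2
        + P2 t1 t2 t3 a1 a2 a3 m1 m2 m3 l * y
        - P3 t1 t2 t3 a1 a2 a3 m1 m2 m3 l
        - (p^3 - P1 t1 t2 t3 a1 a2 a3 q * p^2
            + P2 t1 t2 t3 a1 a2 a3 m1 m2 m3 q * p
            - P3 t1 t2 t3 a1 a2 a3 m1 m2 m3 q) := by
  have h23' : t2 - t3 ≠ 0 := sub_ne_zero.mpr h23
  have hm1 : m1 = -m2 - m3 := by linear_combination hm
  subst hm1
  rw [Matrix.one_fin_three]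
  simp only [Ltil, P1, P2, P3, Matrix.smul_of, Matrix.smul_cons, smul_eq_mul, mul_one,
    mul_zero, Matrix.smul_empty, Matrix.det_fin_three, Matrix.sub_apply, Matrix.of_apply,
    Matrix.cons_val', Matrix.cons_val_zero, Matrix.cons_val_one, Matrix.head_cons,
    Matrix.empty_val', Matrix.cons_val_fin_one, Matrix.head_fin_const, Matrix.vecHead,
    Matrix.vecTail, Function.comp]
  field_simp
  simp only [Matrix.vecHead, Matrix.vecTail, Function.comp, Matrix.cons_val]
  field_simp
  ring

end Gl3Paper
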